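/- Let F : ℝ^n → ℝ, let p ∈ ℝ^n, let j be a coordinate, and suppose F is differentiable at p in direction j with z := −∂F/∂p_j(p). Let Γ > 0, z̃ ∈ ℝ, Δt ∈ (0,1], set Δp := (z̃/Γ)·Δt and p' := p + Δp·e_j, and assume the one-coordinate quadratic upper bound F(p') ≤ F(p) + (∂F/∂p_j(p))·Δp + (Γ/2)·(Δp)². Then F(p) − F(p') ≥ (Γ/4)·(Δp)²/Δt − (1/Γ)·(z − z̃)²·Δt. -/

import Mathlib

/-- abstract progress/error estimate for one asynchronous
coordinate-descent update with inaccurate gradient value `z̃`.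
`F` is differentiable at `p` in direction `j` with directional derivative `d`,
`z := −d`, `Δp := (z̃/Γ)·Δt`, `p' := p + Δp·e_j`, and the one-coordinate
quadratic (descent-lemma) upper bound holds with parameter `Γ`. Then
`F(p) − F(p') ≥ (Γ/4)·(Δp)²/Δt − (1/Γ)·(z−z̃)²·Δt`. -/
theorem stmt_3 (n : ℕ) (F : (Fin n → ℝ) → ℝ) (p : Fin n → ℝ) (j : Fin n)
    (d z : ℝ)
    (hd : HasDerivAt (fun s : ℝ => F (p + s • (Pi.single j (1 : ℝ) : Fin n → ℝ))) d 0)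
    (hz : z = -d)
    (Γ zt Δt : ℝ) (hΓ : 0 < Γ) (hΔt0 : 0 < Δt) (hΔt1 : Δt ≤ 1)
    (Δp : ℝ) (hΔp : Δp = zt / Γ * Δt)
    (p' : Fin n → ℝ) (hp' : p' = p + Δp • (Pi.single j (1 : ℝ) : Fin n → ℝ))
    (hquad : F p' ≤ F p + d * Δp + Γ / 2 * Δp ^ 2) :
    F p - F p' ≥ Γ / 4 * Δp ^ 2 / Δt - 1 / Γ * (z - zt) ^ 2 * Δt := by
  subst hz hΔp
  have h1 : F p - F p' ≥ -d * (zt / Γ * Δt) - Γ / 2 * (zt / Γ * Δt) ^ 2 := by linarith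
  have hΓ' := hΓ.ne'
  have key : -d * (zt / Γ * Δt) - Γ / 2 * (zt / Γ * Δt) ^ 2 ≥
      Γ / 4 * (zt / Γ * Δt) ^ 2 / Δt - 1 / Γ * (-d - zt) ^ 2 * Δt := by
    have e : Γ / 4 * (zt / Γ * Δt) ^ 2 / Δt = zt ^ 2 / (4 * Γ) * Δt := by
      field_simp
    rw [ge_iff_le, e, ← sub_nonneg]
    have h2 : -d * (zt / Γ * Δt) - Γ / 2 * (zt / Γ * Δt) ^ 2 -
        (zt ^ 2 / (4 * Γ) * Δt - 1 / Γ * (-d - zt) ^ 2 * Δt) =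
        (Δt / Γ) * ((d + zt / 2) ^ 2 + zt ^ 2 / 2 * (1 - Δt)) := by
      field_simp; ring
    rw [h2]
    have : (0:ℝ) ≤ (d + zt / 2) ^ 2 + zt ^ 2 / 2 * (1 - Δt) := by
      nlinarith [sq_nonneg (d + zt/2), sq_nonneg zt]
    positivity
  linarith
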